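/- Let qubit 1 be distinguished, let F and Ẽ be finite sets of nonempty finite sets of qubit labels, none of whose members contains qubit 1. Then applying the generalized CNOT gates with target 1 and control sets from F to the hypergraph state whose hyperedges are {ẽ∪{1} : ẽ∈Ẽ} toggles exactly the hyperedges {f∪ẽ}: ( ∏_{f∈F} CNOT_{f,1} ) ∏_{ẽ∈Ẽ} C_{ẽ∪{1}} |+⟩^{⊗N} = ∏_{f∈F} ∏_{ẽ∈Ẽ} C_{f∪ẽ} · ∏_{ẽ∈Ẽ} C_{ẽ∪{1}} |+⟩^{⊗N}. -/

import Mathlib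

noncomputable section

/-- The state space of qubits labeled by `ι`: a vector is the family of its
amplitudes in the computational basis `{|x⟩ : x : ι → Bool}`. -/
abbrev QState (ι : Type) := (ι → Bool) → ℂ

/-- The sign `(−1)^{∏_{i∈e} x_i}` of the generalized controlled-Z gate `C_e`
on the basis vector `|x⟩`. -/
def csign {ι : Type} (e : Finset ι) (x : ι → Bool) : ℂ :=
  if ∀ i ∈ e, x i = true then -1 else 1

/-- The generalized controlled-Z gate `C_e`, the diagonal unitary with
`C_e |x⟩ = (−1)^{∏_{i∈e} x_i} |x⟩`. -/
def Cgate {ι : Type} (e : Finset ι) (ψ : QState ι) : QState ι :=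
  fun x => csign e x * ψ x

/-- The Hadamard gate `H_i` on qubit `i`, acting as the identity on all other
qubits. -/
def Hgate {ι : Type} [DecidableEq ι] (i : ι) (ψ : QState ι) : QState ι :=
  fun x => (((Real.sqrt 2)⁻¹ : ℝ) : ℂ) *
    (ψ (Function.update x i false) +
      (if x i = true then -1 else 1) * ψ (Function.update x i true))

/-- The Pauli-X (bit flip) gate `X_i` on qubit `i`. -/
def Xgate {ι : Type} [DecidableEq ι] (i : ι) (ψ : QState ι) : QState ι :=
  fun x => ψ (Function.update x i (!(x i)))

/-- The generalized CNOT gate with control set `f` and target `t ∉ f`: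
it flips bit `t` of `x` exactly when `∏_{j∈f} x_j = 1`. -/
def CNOTgate {ι : Type} [DecidableEq ι] (f : Finset ι) (t : ι) (ψ : QState ι) : QState ι :=
  fun x => ψ (if ∀ j ∈ f, x j = true then Function.update x t (!(x t)) else x)

/-- `|+⟩^{⊗n}`, the uniform superposition `2^{−n/2} ∑_x |x⟩`. -/
def plusAll (ι : Type) [Fintype ι] : QState ι :=
  fun _ => (((Real.sqrt 2)⁻¹ : ℝ) : ℂ) ^ (Fintype.card ι)

/-- The computational-basis ket `|s⟩`. -/
def zketS {ι : Type} [Fintype ι] [DecidableEq ι] (s : ι → Bool) : QState ι :=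
  fun x => if x = s then 1 else 0

/-- The Pauli-X-basis product ket: qubit `i` is `|+⟩` if `s i = false` and
`|−⟩` if `s i = true`, where `|±⟩ = (|0⟩ ± |1⟩)/√2`. -/
def xketS {ι : Type} [Fintype ι] (s : ι → Bool) : QState ι :=
  fun x => ∏ i, ((((Real.sqrt 2)⁻¹ : ℝ) : ℂ) * (if s i && x i then -1 else 1))

/-- Tensor product of a state of the qubits `κ` with a state of the qubits `ι`. -/
def tensP {κ ι : Type} (φ : QState κ) (u : QState ι) : QState (κ ⊕ ι) :=
  fun x => φ (fun i => x (Sum.inl i)) * u (fun j => x (Sum.inr j))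

/-- The partial inner product `(⟨φ|_κ ⊗ I)`, sending a state of the qubits
`κ ⊕ ι` to a state of the remaining qubits `ι`. -/
def pinner {κ ι : Type} [Fintype κ] [DecidableEq κ] (φ : QState κ) (w : QState (κ ⊕ ι)) :
    QState ι :=
  fun y => ∑ b : κ → Bool, (starRingEnd ℂ) (φ b) * w (Sum.elim b y)

/-- Tensor product of a single-qubit state on qubit `i` with a state of the
remaining qubits. -/
def tensQ {ι : Type} [DecidableEq ι] (i : ι) (φ : Bool → ℂ) (ψ : QState {j : ι // j ≠ i}) :
    QState ι :=
  fun x => φ (x i) * ψ (fun j => x j.1)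

/-- The partial inner product over the single qubit `i`. -/
def pinner1 {ι : Type} [DecidableEq ι] (i : ι) (φ : Bool → ℂ) (w : QState ι) :
    QState {j : ι // j ≠ i} :=
  fun y => ∑ b : Bool, (starRingEnd ℂ) (φ b) * w (fun j => if h : j = i then b else y ⟨j, h⟩)

/-- The hypergraph state `∏_{e∈E} C_e |+⟩^{⊗|V|}` of the hypergraph `(V, E)`. -/
def hgState {ι : Type} [Fintype ι] (E : Finset (Finset ι)) : QState ι :=
  fun x => (∏ e ∈ E, csign e x) * plusAll ι x

/-- Sequential composition (operator product) of a list of operators. -/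
def seqComp {α : Type} (fs : List (α → α)) : α → α := fs.foldr (· ∘ ·) id

lemma csign_update_not_mem {ι : Type} [DecidableEq ι] {e : Finset ι} {t : ι}
    (ht : t ∉ e) (x : ι → Bool) (b : Bool) :
    csign e (Function.update x t b) = csign e x := by
  unfold csign
  have h : (∀ i ∈ e, Function.update x t b i = true) ↔ (∀ i ∈ e, x i = true) := by
    refine forall₂_congr fun i hi => ?_
    rw [Function.update_of_ne (ne_of_mem_of_not_mem hi ht)]
  simp [h]

lemma csign_flip {ι : Type} [DecidableEq ι] {e f : Finset ι} {t : ι}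
    (hte : t ∉ e) (x : ι → Bool) (hcond : ∀ j ∈ f, x j = true) :
    csign (insert t e) (Function.update x t (!(x t))) =
      csign (f ∪ e) x * csign (insert t e) x := by
  unfold csign
  by_cases hA : ∀ i ∈ e, x i = true
  · have hfe : ∀ i ∈ f ∪ e, x i = true := by
      intro i hi; rcases Finset.mem_union.1 hi with h | h
      · exact hcond i h
      · exact hA i h
    have h1 : (∀ i ∈ insert t e, Function.update x t (!(x t)) i = true) ↔ (!(x t)) = true := by
      constructor
      · intro h; simpa using h t (Finset.mem_insert_self t e)
      · intro hb i hi
        rcases Finset.mem_insert.1 hi with rfl | hi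
        · simpa using hb
        · rw [Function.update_of_ne (ne_of_mem_of_not_mem hi hte)]; exact hA i hi
    have h2 : (∀ i ∈ insert t e, x i = true) ↔ x t = true := by
      constructor
      · intro h; exact h t (Finset.mem_insert_self t e)
      · intro hb i hi
        rcases Finset.mem_insert.1 hi with rfl | hi
        · exact hb
        · exact hA i hi
    rw [if_pos hfe, if_congr h1 rfl rfl, if_congr h2 rfl rfl]
    cases x t <;> norm_num
  · push_neg at hA
    obtain ⟨i, hi, hxi⟩ := hA
    have hne : i ≠ t := ne_of_mem_of_not_mem hi hte
    have h1 : ¬ (∀ j ∈ insert t e, Function.update x t (!(x t)) j = true) := by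
      intro h
      exact hxi (by simpa [Function.update_of_ne hne] using h i (Finset.mem_insert_of_mem hi))
    have h2 : ¬ (∀ j ∈ insert t e, x j = true) := fun h => hxi (h i (Finset.mem_insert_of_mem hi))
    have h3 : ¬ (∀ j ∈ f ∪ e, x j = true) := fun h =>
      hxi (h i (Finset.mem_union_right f hi))
    rw [if_neg h1, if_neg h2, if_neg h3]
    norm_num

lemma cnot_step {ι : Type} [Fintype ι] [DecidableEq ι] {t : ι} {f : Finset ι}
    (Et : Finset (Finset ι)) (htf : t ∉ f) (hEt : ∀ e ∈ Et, t ∉ e)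
    (g : QState ι) (hg : ∀ x b, g (Function.update x t b) = g x) :
    CNOTgate f t (fun x => g x * ((∏ e ∈ Et, csign (insert t e) x) * plusAll ι x)) =
      fun x => g x * ((∏ e ∈ Et, csign (f ∪ e) x) *
        ((∏ e ∈ Et, csign (insert t e) x) * plusAll ι x)) := by
  funext x
  unfold CNOTgate
  by_cases hcond : ∀ j ∈ f, x j = true
  · rw [if_pos hcond]
    show g (Function.update x t (!(x t))) *
        ((∏ e ∈ Et, csign (insert t e) (Function.update x t (!(x t)))) *
          plusAll ι (Function.update x t (!(x t)))) = _
    rw [hg]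
    have hp : (∏ e ∈ Et, csign (insert t e) (Function.update x t (!(x t)))) =
        (∏ e ∈ Et, csign (f ∪ e) x) * ∏ e ∈ Et, csign (insert t e) x := by
      rw [← Finset.prod_mul_distrib]
      exact Finset.prod_congr rfl fun e he => csign_flip (hEt e he) x hcond
    have hpl : plusAll ι (Function.update x t (!(x t))) = plusAll ι x := rfl
    rw [hp, hpl]; ring
  · rw [if_neg hcond]
    push_neg at hcond
    obtain ⟨j, hj, hxj⟩ := hcond
    have h1 : (∏ e ∈ Et, csign (f ∪ e) x) = 1 := by
      refine Finset.prod_eq_one fun e _ => ?_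
      unfold csign
      rw [if_neg (fun h => hxj (h j (Finset.mem_union_left e hj)))]
    show g x * _ = _
    rw [h1]; ring

lemma cnot_list {ι : Type} [Fintype ι] [DecidableEq ι] {t : ι}
    (Et : Finset (Finset ι)) (hEt : ∀ e ∈ Et, t ∉ e) :
    ∀ (l : List (Finset ι)), (∀ f ∈ l, t ∉ f) →
    seqComp (l.map fun f => CNOTgate f t)
        (fun x => (∏ e ∈ Et, csign (insert t e) x) * plusAll ι x) =
      fun x => (l.map (fun f => ∏ e ∈ Et, csign (f ∪ e) x)).prod *
        ((∏ e ∈ Et, csign (insert t e) x) * plusAll ι x) := by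
  intro l
  induction l with
  | nil => intro _; funext x; simp [seqComp]
  | cons a l ih =>
    intro hl
    have hg : ∀ (x : ι → Bool) (b : Bool),
        (l.map (fun f => ∏ e ∈ Et, csign (f ∪ e) (Function.update x t b))).prod =
        (l.map (fun f => ∏ e ∈ Et, csign (f ∪ e) x)).prod := by
      intro x b
      congr 1
      refine List.map_congr_left fun f hf => ?_
      refine Finset.prod_congr rfl fun e he => ?_
      refine csign_update_not_mem ?_ x b
      simp only [Finset.mem_union, not_or]
      exact ⟨hl f (List.mem_cons_of_mem a hf), hEt e he⟩
    have hstep := cnot_step Et (hl a List.mem_cons_self) hEt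
      (fun x => (l.map (fun f => ∏ e ∈ Et, csign (f ∪ e) x)).prod) hg
    have hih := ih (fun f hf => hl f (List.mem_cons_of_mem a hf))
    show (CNOTgate a t ∘ seqComp (l.map fun f => CNOTgate f t)) _ = _
    rw [Function.comp, hih, hstep]
    funext x
    simp only [List.map_cons, List.prod_cons]
    ring

/-- With qubit 1 modeled by a distinguished label `t`, let
`F` and `Ẽ` be finite sets of nonempty hyperedges none of which contains `t`.
Applying the generalized CNOT gates with target `t` and control sets from `F`
to the hypergraph state with hyperedges `{ẽ∪{t} : ẽ∈Ẽ}` toggles exactly the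
hyperedges `f∪ẽ`:
`(∏_{f∈F} CNOT_{f,t}) ∏_{ẽ∈Ẽ} C_{ẽ∪{t}} |+⟩^{⊗N}
  = ∏_{f∈F} ∏_{ẽ∈Ẽ} C_{f∪ẽ} · ∏_{ẽ∈Ẽ} C_{ẽ∪{t}} |+⟩^{⊗N}`. -/
theorem CNOT_toggles_hyperedges {ι : Type} [Fintype ι] [DecidableEq ι] (t : ι)
    (F Et : Finset (Finset ι))
    (hF : ∀ f ∈ F, f.Nonempty ∧ t ∉ f) (hEt : ∀ e ∈ Et, e.Nonempty ∧ t ∉ e) :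
    seqComp (F.toList.map fun f => CNOTgate f t)
        (fun x => (∏ e ∈ Et, csign (insert t e) x) * plusAll ι x) =
      fun x => (∏ f ∈ F, ∏ e ∈ Et, csign (f ∪ e) x) *
        ((∏ e ∈ Et, csign (insert t e) x) * plusAll ι x) := by
  have h := cnot_list Et (fun e he => (hEt e he).2) F.toList
    (fun f hf => (hF f (Finset.mem_toList.1 hf)).2)
  rw [h]
  funext x
  rw [Finset.prod_map_toList F (fun f => ∏ e ∈ Et, csign (f ∪ e) x)]
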